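/- Let p > q > 0 be coprime integers, let r₀, …, r_k be integers with rᵢ ≤ −2 for all i and [r₀, …, r_k]⁻ = −p/q, and let p′, q′ be the unique integers with p q′ − q p′ = 1, 0 < p′ < p and 0 < q′ ≤ q. Let m be the length of the Bezout chain of (p′, q′) (with m = 0 when (p′, q′) = (1, 1)), and let d′ᵢ = p′_{i−1} − p′ᵢ for 1 ≤ i ≤ m be the differences of first coordinates along that chain. Then the number of distinct integers of the form Σ_{i=1}^{m} εᵢ d′ᵢ, as ε ranges over all functions {1, …, m} → {+1, −1} (this number being 1 when m = 0), equals |(r₀ + 1)(r₁ + 1) ⋯ (r_k + 1)|. -/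

import Mathlib

/-- Negative continued fraction value `[r₀, …, r_k]⁻`:
`[r_k]⁻ = r_k` and `[r_j, …, r_k]⁻ = r_j − 1/[r_{j+1}, …, r_k]⁻`. -/
def ncf : List ℤ → ℚ
  | [] => 0
  | [r] => (r : ℚ)
  | r :: rest => (r : ℚ) - 1 / ncf rest

/-- `(p′, q′)` is the Bezout successor of `(p, q)`:
`p q′ − q p′ = 1`, `0 < p′ < p`, `0 < q′ ≤ q`. -/
def BezoutNext (p q p' q' : ℤ) : Prop :=
  p * q' - q * p' = 1 ∧ 0 < p' ∧ p' < p ∧ 0 < q' ∧ q' ≤ q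

/-- `P 0 = (p, q), …, P n = (1, 1)` is the Bezout chain of `(p, q)`: each step
is the Bezout successor, and `(1, 1)` is reached exactly at step `n`. -/
def IsBezoutChain (p q : ℤ) (n : ℕ) (P : ℕ → ℤ × ℤ) : Prop :=
  P 0 = (p, q) ∧ P n = (1, 1) ∧ (∀ i < n, P i ≠ (1, 1)) ∧
  ∀ i < n, BezoutNext (P i).1 (P i).2 (P (i + 1)).1 (P (i + 1)).2

-- from t2.lean

/-- numerators of prefix convergents (shifted index): `Wn a (j+1)` is the
numerator of `[a 0, …, a (j-1)]⁻`. -/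
def Wn (a : ℕ → ℤ) : ℕ → ℤ
  | 0 => 0
  | 1 => 1
  | (j+2) => a j * Wn a (j+1) - Wn a j

def Yn (a : ℕ → ℤ) : ℕ → ℤ
  | 0 => -1
  | 1 => 0
  | (j+2) => a j * Yn a (j+1) - Yn a j

lemma Wn_congr {a b : ℕ → ℤ} : ∀ j, (∀ t, t + 2 ≤ j → a t = b t) → Wn a j = Wn b j
  | 0, _ => rfl
  | 1, _ => rfl
  | (j+2), h => by
      simp only [Wn]
      rw [Wn_congr (j+1) (fun t ht => h t (by omega)), Wn_congr j (fun t ht => h t (by omega)),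
        h j (by omega)]

lemma Yn_congr {a b : ℕ → ℤ} : ∀ j, (∀ t, t + 2 ≤ j → a t = b t) → Yn a j = Yn b j
  | 0, _ => rfl
  | 1, _ => rfl
  | (j+2), h => by
      simp only [Yn]
      rw [Yn_congr (j+1) (fun t ht => h t (by omega)), Yn_congr j (fun t ht => h t (by omega)),
        h j (by omega)]

/-- growth of `Wn`. -/
lemma Wn_growth {a : ℕ → ℤ} : ∀ j, (∀ t, t < j → 2 ≤ a t) →
    0 ≤ Wn a j ∧ Wn a j < Wn a (j+1)
  | 0, _ => by simp [Wn]
  | (j+1), h => by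
      obtain ⟨h0, h1⟩ := Wn_growth j (fun t ht => h t (by omega))
      refine ⟨by omega, ?_⟩
      have ha : 2 ≤ a j := h j (by omega)
      have : Wn a (j+2) = a j * Wn a (j+1) - Wn a j := rfl
      nlinarith

lemma Yn_growth {a : ℕ → ℤ} : ∀ j, (∀ t, t < j → 2 ≤ a t) →
    -1 ≤ Yn a j ∧ Yn a j < Yn a (j+1)
  | 0, _ => by simp [Yn]
  | (j+1), h => by
      obtain ⟨h0, h1⟩ := Yn_growth j (fun t ht => h t (by omega))
      refine ⟨by omega, ?_⟩
      have ha : 2 ≤ a j := h j (by omega)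
      have : Yn a (j+2) = a j * Yn a (j+1) - Yn a j := rfl
      nlinarith

/-- determinant identity. -/
lemma det_WY (a : ℕ → ℤ) : ∀ j, Wn a (j+1) * Yn a j - Yn a (j+1) * Wn a j = -1
  | 0 => by simp [Wn, Yn]
  | (j+1) => by
      have h := det_WY a j
      have hW : Wn a (j+2) = a j * Wn a (j+1) - Wn a j := rfl
      have hY : Yn a (j+2) = a j * Yn a (j+1) - Yn a j := rfl
      rw [hW, hY]; ring_nf; ring_nf at h; linarith

/-- `W - Y` growth: `1 ≤ Wn - Yn` and nondecreasing. -/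
lemma WY_diff {a : ℕ → ℤ} : ∀ j, (∀ t, t < j → 2 ≤ a t) →
    1 ≤ Wn a j - Yn a j ∧ Wn a j - Yn a j ≤ Wn a (j+1) - Yn a (j+1)
  | 0, _ => by simp [Wn, Yn]
  | (j+1), h => by
      obtain ⟨h0, h1⟩ := WY_diff j (fun t ht => h t (by omega))
      refine ⟨by omega, ?_⟩
      have ha : 2 ≤ a j := h j (by omega)
      have hW : Wn a (j+2) = a j * Wn a (j+1) - Wn a j := rfl
      have hY : Yn a (j+2) = a j * Yn a (j+1) - Yn a j := rfl
      nlinarith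

-- from t3.lean

/-- peeling the front entry. -/
lemma shift_WY (a : ℕ → ℤ) : ∀ j,
    Yn a (j+2) = Wn (fun i => a (i+1)) (j+1) ∧
    Wn a (j+2) = a 0 * Wn (fun i => a (i+1)) (j+1) - Yn (fun i => a (i+1)) (j+1)
  | 0 => by simp [Wn, Yn]
  | 1 => by
      have h1 : Yn a 3 = a 1 * Yn a 2 - Yn a 1 := rfl
      have h2 : Wn a 3 = a 1 * Wn a 2 - Wn a 1 := rfl
      have h3 : Wn (fun i => a (i+1)) 2 = a 1 * Wn (fun i => a (i+1)) 1
          - Wn (fun i => a (i+1)) 0 := rfl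
      have h4 : Yn (fun i => a (i+1)) 2 = a 1 * Yn (fun i => a (i+1)) 1
          - Yn (fun i => a (i+1)) 0 := rfl
      rw [h1, h2, h3, h4]
      simp [Wn, Yn]
      ring
  | (j+2) => by
      obtain ⟨e1, e2⟩ := shift_WY a j
      obtain ⟨f1, f2⟩ := shift_WY a (j+1)
      have h1 : Yn a (j+4) = a (j+2) * Yn a (j+3) - Yn a (j+2) := rfl
      have h2 : Wn a (j+4) = a (j+2) * Wn a (j+3) - Wn a (j+2) := rfl
      have h3 : Wn (fun i => a (i+1)) (j+3) = a (j+2) * Wn (fun i => a (i+1)) (j+2)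
          - Wn (fun i => a (i+1)) (j+1) := rfl
      have h4 : Yn (fun i => a (i+1)) (j+3) = a (j+2) * Yn (fun i => a (i+1)) (j+2)
          - Yn (fun i => a (i+1)) (j+1) := rfl
      rw [h1, h2, h3, h4, f1, f2, e1, e2]
      constructor <;> ring

-- from t4.lean

lemma Wn_pos {a : ℕ → ℤ} (j : ℕ) (h : ∀ t, t < j → 2 ≤ a t) : 1 ≤ Wn a (j+1) := by
  have := Wn_growth j h; omega

lemma Yn_nonneg {a : ℕ → ℤ} (j : ℕ) (h : ∀ t, t < j → 2 ≤ a t) : 0 ≤ Yn a (j+1) := by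
  have := Yn_growth j h; omega

lemma Yn_pos {a : ℕ → ℤ} (j : ℕ) (h : ∀ t, t < j+1 → 2 ≤ a t) : 1 ≤ Yn a (j+2) := by
  have h1 := Yn_growth j (fun t ht => h t (by omega))
  have h2 := Yn_growth (j+1) h
  have e : j + 1 + 1 = j + 2 := rfl
  rw [e] at h2; omega

lemma ncf_cons (x : ℤ) (l : List ℤ) (hl : l ≠ []) : ncf (x :: l) = x - 1 / ncf l := by
  cases l with
  | nil => exact absurd rfl hl
  | cons y t => rfl

lemma ncf_value : ∀ k, ∀ r : ℕ → ℤ, (∀ i ≤ k, r i ≤ -2) →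
    ncf (List.ofFn fun i : Fin (k+1) => r i.1)
      = -(Wn (fun i => -r i) (k+2) : ℚ) / (Yn (fun i => -r i) (k+2) : ℚ) := by
  intro k
  induction k with
  | zero =>
    intro r hr
    simp [List.ofFn_succ, List.ofFn_zero, ncf, Wn, Yn]
  | succ k IH =>
    intro r hr
    set a : ℕ → ℤ := fun i => -r i with ha
    have ha2 : ∀ t, t < k+2 → 2 ≤ a t := fun t ht => by
      have := hr t (by omega); simp [ha]; omega
    rw [List.ofFn_succ]
    have htail : (List.ofFn fun i : Fin (k+1) => r (i.succ : Fin (k+2)).1)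
        = List.ofFn fun i : Fin (k+1) => (fun t => r (t+1)) i.1 := by
      congr 1
    rw [htail, ncf_cons _ _ (by intro h; simpa using congrArg List.length h), IH _ (fun i hi => hr (i+1) (by omega))]
    set a' : ℕ → ℤ := fun i => -r (i+1) with ha'
    have ha'2 : ∀ t, t < k+1 → 2 ≤ a' t := fun t ht => by
      have := hr (t+1) (by omega); simp [ha']; omega
    have hW' : 1 ≤ Wn a' (k+2) := Wn_pos (k+1) ha'2
    have hY' : 1 ≤ Yn a' (k+2) := Yn_pos k ha'2
    have haa' : a' = fun i => a (i+1) := rfl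
    have hs := shift_WY a (k+1)
    rw [← haa'] at hs
    obtain ⟨hs1, hs2⟩ := hs
    rw [hs1, hs2]
    have hWQ : (0:ℚ) < (Wn a' (k+2) : ℚ) := by exact_mod_cast hW'
    have hYQ : (0:ℚ) < (Yn a' (k+2) : ℚ) := by exact_mod_cast hY'
    have h0 : a 0 = -r 0 := rfl
    rw [h0]
    have hW0 : (Wn a' (k+2) : ℚ) ≠ 0 := ne_of_gt hWQ
    have hY0 : (Yn a' (k+2) : ℚ) ≠ 0 := ne_of_gt hYQ
    push_cast
    rw [div_div_eq_mul_div, neg_div, div_neg]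
    field_simp
    simp only [Fin.val_zero]
    ring

-- from t5.lean

lemma bezoutNext_unique {p q x1 y1 x2 y2 : ℤ} (h1 : BezoutNext p q x1 y1)
    (h2 : BezoutNext p q x2 y2) : x1 = x2 ∧ y1 = y2 := by
  obtain ⟨e1, hx1, hx1p, hy1, hy1q⟩ := h1
  obtain ⟨e2, hx2, hx2p, hy2, hy2q⟩ := h2
  have hco : IsCoprime p q := ⟨y1, -x1, by linarith⟩
  have hd : p ∣ q * (x1 - x2) := ⟨y1 - y2, by linear_combination e2 - e1⟩
  have hd2 : p ∣ x1 - x2 := (hco.dvd_of_dvd_mul_left hd)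
  obtain ⟨c, hc⟩ := hd2
  have hp : 0 < p := by linarith
  have hc0 : c = 0 := by nlinarith
  subst hc0
  simp at hc
  have hx : x1 = x2 := by omega
  subst hx
  refine ⟨rfl, ?_⟩
  have : p * (y1 - y2) = 0 := by linear_combination e1 - e2
  have := mul_eq_zero.1 this
  omega

lemma eq_of_div_eq {p q W Y : ℤ} (hp : 0 < p) (hq : 0 < q) (hW : 0 < W) (hY : 0 < Y)
    (hco : IsCoprime p q) (hco2 : IsCoprime W Y)
    (h : (p : ℚ) / q = (W : ℚ) / Y) : p = W ∧ q = Y := by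
  have hq0 : (q:ℚ) ≠ 0 := by positivity
  have hY0 : (Y:ℚ) ≠ 0 := by positivity
  rw [div_eq_div_iff hq0 hY0] at h
  have hZ : p * Y = W * q := by exact_mod_cast h
  have h1 : p ∣ W := hco.dvd_of_dvd_mul_right ⟨Y, by linarith [hZ]⟩
  have h2 : W ∣ p := hco2.dvd_of_dvd_mul_right ⟨q, by linarith [hZ]⟩
  have hpW : p = W := Int.dvd_antisymm (by positivity) (by positivity) h1 h2
  subst hpW
  refine ⟨rfl, ?_⟩
  have : p * Y = p * q := by linarith
  exact (mul_left_cancel₀ (by positivity) this).symm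

-- from t6.lean

/-- the list of first-coordinate differences along the Bezout chain of
`(Wn a (k+2) - Wn a (k+1), Yn a (k+2) - Yn a (k+1))`. -/
def dl (a : ℕ → ℤ) : ℕ → List ℤ
  | 0 => List.replicate (a 0 - 2).toNat 1
  | (k+1) => List.replicate (a (k+1) - 2).toNat (Wn a (k+2)) ++ dl a k

lemma dl_congr {a b : ℕ → ℤ} : ∀ k, (∀ t ≤ k, a t = b t) → dl a k = dl b k
  | 0, h => by simp [dl, h 0 (le_refl 0)]
  | (k+1), h => by
      simp only [dl]
      rw [h (k+1) le_rfl, Wn_congr (k+2) (fun t ht => h t (by omega)),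
        dl_congr k (fun t ht => h t (by omega))]

lemma dl_cons {a : ℕ → ℤ} {k : ℕ} (h3 : 3 ≤ a k) :
    dl a k = Wn a (k+1) :: dl (Function.update a k (a k - 1)) k := by
  have hupk : Function.update a k (a k - 1) k = a k - 1 := Function.update_self _ _ _
  cases k with
  | zero =>
    simp only [dl]
    have h1 : Wn a 1 = 1 := rfl
    rw [h1, hupk]
    have : (a 0 - 2).toNat = (a 0 - 1 - 2).toNat + 1 := by omega
    rw [this, List.replicate_succ]
  | succ n =>
    simp only [dl]
    have hW : Wn (Function.update a (n+1) (a (n+1) - 1)) (n+2) = Wn a (n+2) :=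
      Wn_congr (n+2) (fun t ht => Function.update_of_ne (by omega) _ _)
    have hdl : dl (Function.update a (n+1) (a (n+1) - 1)) n = dl a n :=
      dl_congr n (fun t ht => Function.update_of_ne (by omega) _ _)
    rw [hW, hdl, hupk]
    have : (a (n+1) - 2).toNat = (a (n+1) - 1 - 2).toNat + 1 := by omega
    rw [this, List.replicate_succ]
    rfl

lemma chain_eq_dl : ∀ n m k (a : ℕ → ℤ) (P : ℕ → ℤ × ℤ),
    m + k ≤ n → (∀ t ≤ k, 2 ≤ a t) →
    IsBezoutChain (Wn a (k+2) - Wn a (k+1)) (Yn a (k+2) - Yn a (k+1)) m P →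
    m = (dl a k).length ∧ ∀ i < m, (P i).1 - (P (i+1)).1 = (dl a k).getD i 0 := by
  intro n
  induction n with
  | zero =>
    intro m k a P hmk ha ⟨hP0, hPm, hne, hstep⟩
    have hm : m = 0 := by omega
    have hk : k = 0 := by omega
    subst hm; subst hk
    rw [hP0] at hPm
    have h1 : Wn a 2 - Wn a 1 = 1 := (Prod.mk.injEq _ _ _ _ ▸ hPm).1
    have h2 : Wn a 2 = a 0 * 1 - 0 := rfl
    have h1' : Wn a 1 = 1 := rfl
    have ha0 : a 0 = 2 := by rw [h2, h1'] at h1; omega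
    constructor
    · simp [dl, ha0]
    · omega
  | succ n IH =>
    intro m k a P hmk ha hch
    obtain ⟨hP0, hPm, hne, hstep⟩ := hch
    -- useful growth facts
    have gW1 := Wn_growth (k+1) (fun t ht => ha t (by omega))
    have gW0 := Wn_growth k (fun t ht => ha t (by omega))
    have gY1 := Yn_growth (k+1) (fun t ht => ha t (by omega))
    have gY0 := Yn_growth k (fun t ht => ha t (by omega))
    have hWrec : Wn a (k+2) = a k * Wn a (k+1) - Wn a k := rfl
    have hYrec : Yn a (k+2) = a k * Yn a (k+1) - Yn a k := rfl
    have hak : 2 ≤ a k := ha k le_rfl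
    by_cases h2 : a k = 2
    · -- degenerate top block
      have eW : Wn a (k+2) - Wn a (k+1) = Wn a (k+1) - Wn a k := by rw [hWrec, h2]; ring
      have eY : Yn a (k+2) - Yn a (k+1) = Yn a (k+1) - Yn a k := by rw [hYrec, h2]; ring
      cases k with
      | zero =>
        have e1 : Wn a 1 - Wn a 0 = 1 := rfl
        have e2 : Yn a 1 - Yn a 0 = 1 := rfl
        rw [eW, eY, e1, e2] at hP0
        have hm0 : m = 0 := by
          by_contra hm0
          exact hne 0 (by omega) hP0
        subst hm0
        constructor
        · simp [dl, h2]
        · omega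
      | succ j =>
        have := IH m j a P (by omega) (fun t ht => ha t (by omega))
          ⟨by rw [← eW, ← eY]; exact hP0, hPm, hne, hstep⟩
        obtain ⟨hlen, hdiff⟩ := this
        have hdl : dl a (j+1) = dl a j := by
          simp [dl, h2]
        rw [hdl]
        exact ⟨hlen, hdiff⟩
    · -- a k ≥ 3
      have h3 : 3 ≤ a k := by omega
      set a' : ℕ → ℤ := Function.update a k (a k - 1) with ha'def
      have hupk : a' k = a k - 1 := Function.update_self _ _ _
      have hW1' : Wn a' (k+1) = Wn a (k+1) :=
        Wn_congr (k+1) (fun t ht => Function.update_of_ne (by omega) _ _)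
      have hW0' : Wn a' k = Wn a k :=
        Wn_congr k (fun t ht => Function.update_of_ne (by omega) _ _)
      have hY1' : Yn a' (k+1) = Yn a (k+1) :=
        Yn_congr (k+1) (fun t ht => Function.update_of_ne (by omega) _ _)
      have hY0' : Yn a' k = Yn a k :=
        Yn_congr k (fun t ht => Function.update_of_ne (by omega) _ _)
      have hWrec' : Wn a' (k+2) = a' k * Wn a' (k+1) - Wn a' k := rfl
      have hYrec' : Yn a' (k+2) = a' k * Yn a' (k+1) - Yn a' k := rfl
      have eW' : Wn a' (k+2) - Wn a' (k+1) = Wn a (k+2) - 2 * Wn a (k+1) := by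
        rw [hWrec', hupk, hW1', hW0', hWrec]; ring
      have eY' : Yn a' (k+2) - Yn a' (k+1) = Yn a (k+2) - 2 * Yn a (k+1) := by
        rw [hYrec', hupk, hY1', hY0', hYrec]; ring
      -- start has first coordinate ≥ 2, so m ≥ 1
      have hstart1 : 2 ≤ Wn a (k+2) - Wn a (k+1) := by rw [hWrec]; nlinarith
      have hm1 : 1 ≤ m := by
        rcases Nat.eq_zero_or_pos m with hm0 | hm0
        · subst hm0
          rw [hP0] at hPm
          have := (Prod.mk.injEq _ _ _ _ ▸ hPm).1
          omega
        · exact hm0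
      obtain ⟨m', rfl⟩ : ∃ m', m = m' + 1 := ⟨m - 1, by omega⟩
      -- the explicit Bezout successor
      have hdet := det_WY a (k+1)
      have hBN : BezoutNext (Wn a (k+2) - Wn a (k+1)) (Yn a (k+2) - Yn a (k+1))
          (Wn a (k+2) - 2 * Wn a (k+1)) (Yn a (k+2) - 2 * Yn a (k+1)) := by
        refine ⟨by linear_combination -hdet, ?_, ?_, ?_, ?_⟩
        · rw [hWrec]; nlinarith
        · have : 1 ≤ Wn a (k+1) := by omega
          omega
        · rw [hYrec]; nlinarith
        · have : 0 ≤ Yn a (k+1) := by omega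
          omega
      have hstep0 := hstep 0 (by omega)
      rw [hP0] at hstep0
      obtain ⟨e1, e2⟩ := bezoutNext_unique hstep0 hBN
      have hP1 : P 1 = (Wn a' (k+2) - Wn a' (k+1), Yn a' (k+2) - Yn a' (k+1)) := by
        rw [eW', eY']
        exact Prod.ext e1 e2
      -- shifted chain
      have ha'2 : ∀ t ≤ k, 2 ≤ a' t := by
        intro t ht
        rcases eq_or_ne t k with rfl | hne'
        · omega
        · rw [ha'def, Function.update_of_ne hne']; exact ha t ht
      have hch' : IsBezoutChain (Wn a' (k+2) - Wn a' (k+1)) (Yn a' (k+2) - Yn a' (k+1))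
          m' (fun i => P (i+1)) := by
        refine ⟨hP1, hPm, fun i hi => hne (i+1) (by omega), fun i hi => hstep (i+1) (by omega)⟩
      obtain ⟨hlen, hdiff⟩ := IH m' k a' (fun i => P (i+1)) (by omega) ha'2 hch'
      have hcons : dl a k = Wn a (k+1) :: dl a' k := dl_cons h3
      constructor
      · rw [hcons]; simp [hlen]
      · intro i hi
        cases i with
        | zero =>
          rw [hP0, hP1, hcons, eW']
          simp
          ring
        | succ i' =>
          have := hdiff i' (by omega)
          rw [hcons]
          simpa using this

-- from t7.lean

/-- Finset of all signed sums of a list. -/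
def sgnF : List ℤ → Finset ℤ
  | [] => {0}
  | d :: l => (sgnF l).image (· + d) ∪ (sgnF l).image (· - d)

lemma sgnF_bound : ∀ (l : List ℤ), (∀ y ∈ l, 0 ≤ y) → ∀ x ∈ sgnF l, |x| ≤ l.sum := by
  intro l
  induction l with
  | nil => intro _ x hx; simp [sgnF] at hx; simp [hx]
  | cons d t IH =>
    intro hpos x hx
    simp only [sgnF, Finset.mem_union, Finset.mem_image] at hx
    have hd : 0 ≤ d := hpos d (by simp)
    have ht : ∀ y ∈ t, 0 ≤ y := fun y hy => hpos y (by simp [hy])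
    rcases hx with ⟨y, hy, rfl⟩ | ⟨y, hy, rfl⟩ <;>
      · have := IH ht y hy
        simp only [List.sum_cons]
        rw [abs_le] at *
        omega

lemma sgnF_nonempty : ∀ (l : List ℤ), (sgnF l).Nonempty := by
  intro l
  induction l with
  | nil => exact ⟨0, by simp [sgnF]⟩
  | cons d t IH =>
    obtain ⟨x, hx⟩ := IH
    exact ⟨x + d, by simp only [sgnF, Finset.mem_union, Finset.mem_image]; exact Or.inl ⟨x, hx, rfl⟩⟩

/-- signed sums of `replicate c D ++ l`. -/
lemma sgnF_replicate_append (D : ℤ) (l : List ℤ) : ∀ c : ℕ,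
    sgnF (List.replicate c D ++ l)
      = ((Finset.range (c+1)) ×ˢ (sgnF l)).image (fun p => (2 * (p.1 : ℤ) - c) * D + p.2) := by
  intro c
  induction c with
  | zero =>
    ext x
    simp [sgnF]
  | succ c IH =>
    have hrep : List.replicate (c+1) D ++ l = D :: (List.replicate c D ++ l) := by
      simp [List.replicate_succ]
    rw [hrep]
    ext x
    simp only [sgnF, Finset.mem_union, Finset.mem_image, IH, Finset.mem_product,
      Finset.mem_range, Prod.exists]
    constructor
    · rintro (⟨y, ⟨i, t, ⟨hi, ht⟩, rfl⟩, rfl⟩ | ⟨y, ⟨i, t, ⟨hi, ht⟩, rfl⟩, rfl⟩)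
      · exact ⟨i+1, t, ⟨by omega, ht⟩, by push_cast; ring⟩
      · exact ⟨i, t, ⟨by omega, ht⟩, by push_cast; ring⟩
    · rintro ⟨i, t, ⟨hi, ht⟩, rfl⟩
      cases i with
      | zero => exact Or.inr ⟨(2 * ((0:ℕ) : ℤ) - c) * D + t, ⟨0, t, ⟨by omega, ht⟩, rfl⟩, by push_cast; ring⟩
      | succ i' => exact Or.inl ⟨(2 * ((i':ℕ) : ℤ) - c) * D + t, ⟨i', t, ⟨by omega, ht⟩, rfl⟩, by push_cast; ring⟩

lemma sgnF_replicate_append_card (D : ℤ) (l : List ℤ) (c : ℕ)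
    (hpos : ∀ y ∈ l, 0 ≤ y) (hD : l.sum < D) :
    (sgnF (List.replicate c D ++ l)).card = (c+1) * (sgnF l).card := by
  rw [sgnF_replicate_append]
  rw [Finset.card_image_of_injOn, Finset.card_product, Finset.card_range]
  rintro ⟨i, t⟩ hit ⟨i', t'⟩ hit' he
  simp only [Finset.mem_coe, Finset.mem_product, Finset.mem_range] at hit hit'
  have ht := sgnF_bound l hpos t hit.2
  have ht' := sgnF_bound l hpos t' hit'.2
  simp only at he
  have hD0 : 0 < D := lt_of_le_of_lt (List.sum_nonneg hpos) hD
  have hu : t' - t = 2 * ((i:ℤ) - i') * D := by linarith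
  rw [abs_le] at ht ht'
  have h1 : -(2*D) < t' - t := by omega
  have h2 : t' - t < 2*D := by omega
  have hii : (i:ℤ) = (i':ℤ) := by
    by_contra hne
    rcases lt_or_gt_of_ne hne with hlt | hgt
    · have : (i:ℤ) - i' ≤ -1 := by omega
      nlinarith
    · have : 1 ≤ (i:ℤ) - i' := by omega
      nlinarith
  have hii' : i = i' := by exact_mod_cast hii
  subst hii'
  have : t = t' := by omega
  exact Prod.ext rfl this

-- from t8.lean

lemma dl_pos {a : ℕ → ℤ} : ∀ k, (∀ t ≤ k, 2 ≤ a t) → ∀ y ∈ dl a k, 0 ≤ y := by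
  intro k
  induction k with
  | zero => intro ha y hy; simp [dl] at hy; omega
  | succ k IH =>
    intro ha y hy
    simp only [dl, List.mem_append, List.mem_replicate] at hy
    rcases hy with ⟨_, rfl⟩ | hy
    · have h := Wn_growth (k+1) (fun t ht => ha t (by omega))
      have e : Wn a (k+1+1) = Wn a (k+2) := rfl
      omega
    · exact IH (fun t ht => ha t (by omega)) y hy

lemma dl_sum {a : ℕ → ℤ} : ∀ k, (∀ t ≤ k, 2 ≤ a t) →
    (dl a k).sum = Wn a (k+2) - Wn a (k+1) - 1 := by
  intro k
  induction k with
  | zero =>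
    intro ha
    have h2 : Wn a 2 = a 0 * 1 - 0 := rfl
    have h1 : Wn a 1 = 1 := rfl
    have := ha 0 (le_refl 0)
    simp [dl, List.sum_replicate, h2, h1]
    omega
  | succ k IH =>
    intro ha
    have hrec : Wn a (k+3) = a (k+1) * Wn a (k+2) - Wn a (k+1) := rfl
    have hW := Wn_growth (k+1) (fun t ht => ha t (by omega))
    have := ha (k+1) le_rfl
    simp only [dl, List.sum_append, List.sum_replicate, IH (fun t ht => ha t (by omega)),
      nsmul_eq_mul]
    have hc : ((a (k+1) - 2).toNat : ℤ) = a (k+1) - 2 := by omega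
    have e1 : Wn a (k+1+2) = a (k+1) * Wn a (k+2) - Wn a (k+1) := rfl
    have e2 : Wn a (k+1+1) = Wn a (k+2) := rfl
    rw [hc, e1, e2]
    ring

lemma dl_card {a : ℕ → ℤ} : ∀ k, (∀ t ≤ k, 2 ≤ a t) →
    ((sgnF (dl a k)).card : ℤ) = ∏ j ∈ Finset.range (k+1), (a j - 1) := by
  intro k
  induction k with
  | zero =>
    intro ha
    have := ha 0 (le_refl 0)
    have h0 : dl a 0 = List.replicate (a 0 - 2).toNat 1 ++ [] := by simp [dl]
    rw [h0, sgnF_replicate_append_card 1 [] _ (by simp) (by simp)]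
    simp [sgnF]
    omega
  | succ k IH =>
    intro ha
    have hW := Wn_growth (k+1) (fun t ht => ha t (by omega))
    have hsum := dl_sum k (fun t ht => ha t (by omega))
    have hpos := dl_pos k (fun t ht => ha t (by omega))
    have := ha (k+1) le_rfl
    have hcard := sgnF_replicate_append_card (Wn a (k+2)) (dl a k) (a (k+1) - 2).toNat
      hpos (by omega)
    simp only [dl]
    rw [hcard, Finset.prod_range_succ, ← IH (fun t ht => ha t (by omega))]
    push_cast
    have hc : ((a (k+1) - 2).toNat : ℤ) = a (k+1) - 2 := by omega
    rw [hc]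
    ring

lemma sgnF_mem (s : ℤ) : ∀ (l : List ℤ), s ∈ sgnF l ↔
    ∃ ε : ℕ → ℤ, (∀ i < l.length, ε i = 1 ∨ ε i = -1) ∧
      s = ∑ i ∈ Finset.range l.length, ε i * l.getD i 0 := by
  intro l
  induction l generalizing s with
  | nil =>
    simp only [sgnF, Finset.mem_singleton, List.length_nil, Finset.range_zero,
      Finset.sum_empty]
    constructor
    · rintro rfl; exact ⟨fun _ => 1, by omega, rfl⟩
    · rintro ⟨ε, _, rfl⟩; rfl
  | cons d t IH =>
    simp only [sgnF, Finset.mem_union, Finset.mem_image, List.length_cons]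
    constructor
    · rintro (⟨y, hy, rfl⟩ | ⟨y, hy, rfl⟩) <;>
        obtain ⟨ε, hε, rfl⟩ := (IH y).1 hy
      · refine ⟨fun i => if i = 0 then 1 else ε (i-1), fun i hi => by
          dsimp only
          by_cases h : i = 0
          · simp [h]
          · simp only [h, if_false]
            exact hε (i-1) (by omega), ?_⟩
        rw [Finset.sum_range_succ']
        simp
        try ring
      · refine ⟨fun i => if i = 0 then -1 else ε (i-1), fun i hi => by
          dsimp only
          by_cases h : i = 0
          · simp [h]
          · simp only [h, if_false]
            exact hε (i-1) (by omega), ?_⟩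
        rw [Finset.sum_range_succ']
        simp
        try ring
    · rintro ⟨ε, hε, rfl⟩
      have hy : (∑ i ∈ Finset.range t.length, ε (i+1) * t.getD i 0) ∈ sgnF t :=
        (IH _).2 ⟨fun i => ε (i+1), fun i hi => hε (i+1) (by omega), rfl⟩
      rw [Finset.sum_range_succ']
      rcases hε 0 (by omega) with h0 | h0
      · exact Or.inl ⟨_, hy, by simp [h0]⟩
      · exact Or.inr ⟨_, hy, by simp [h0]; ring⟩

theorem stmt11 (p q : ℤ) (hq : 0 < q) (hqp : q < p) (hco : Int.gcd p q = 1)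
    (k : ℕ) (r : ℕ → ℤ) (hr : ∀ i ≤ k, r i ≤ -2)
    (hval : ncf (List.ofFn fun i : Fin (k + 1) => r i.1) = -(p : ℚ) / (q : ℚ))
    (p' q' : ℤ) (hb : BezoutNext p q p' q')
    (m : ℕ) (P' : ℕ → ℤ × ℤ) (hchain : IsBezoutChain p' q' m P')
    (d' : ℕ → ℤ) (hd' : ∀ i, 1 ≤ i → i ≤ m → d' i = (P' (i - 1)).1 - (P' i).1) :
    Set.ncard {s : ℤ | ∃ ε : ℕ → ℤ,
        (∀ i ∈ Finset.Icc 1 m, ε i = 1 ∨ ε i = -1) ∧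
        s = ∑ i ∈ Finset.Icc 1 m, ε i * d' i}
      = (∏ i ∈ Finset.range (k + 1), (r i + 1)).natAbs := by
  set a : ℕ → ℤ := fun i => -r i with hadef
  have ha2 : ∀ t ≤ k, 2 ≤ a t := fun t ht => by
    have := hr t ht; simp [hadef]; omega
  -- index bookkeeping
  have eW : Wn a (k+1+1) = Wn a (k+2) := rfl
  have eY : Yn a (k+1+1) = Yn a (k+2) := rfl
  have gW1 := Wn_growth (k+1) (fun t ht => ha2 t (by omega))
  have gY1 := Yn_growth (k+1) (fun t ht => ha2 t (by omega))
  rw [eW] at gW1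
  rw [eY] at gY1
  have hW1pos : 1 ≤ Wn a (k+1) := Wn_pos k (fun t ht => ha2 t (by omega))
  have hY1nonneg : 0 ≤ Yn a (k+1) := Yn_nonneg k (fun t ht => ha2 t (by omega))
  have hY2pos : 1 ≤ Yn a (k+2) := Yn_pos k (fun t ht => ha2 t (by omega))
  have hdet := det_WY a (k+1)
  rw [eW, eY] at hdet
  -- identify (p, q) with the convergent
  have hv := ncf_value k r hr
  rw [hval] at hv
  have hpq : (p : ℚ) / q = (Wn a (k+2) : ℚ) / (Yn a (k+2) : ℚ) := by
    rw [neg_div, neg_div] at hv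
    exact neg_inj.mp hv
  have hcoWY : IsCoprime (Wn a (k+2)) (Yn a (k+2)) :=
    ⟨-Yn a (k+1), Wn a (k+1), by linear_combination -hdet⟩
  have hcopq : IsCoprime p q := Int.isCoprime_iff_gcd_eq_one.mpr hco
  obtain ⟨hpW, hqY⟩ := eq_of_div_eq (by omega) hq (by omega) (by omega) hcopq hcoWY hpq
  -- identify (p', q')
  have hBN0 : BezoutNext p q (Wn a (k+2) - Wn a (k+1)) (Yn a (k+2) - Yn a (k+1)) := by
    rw [hpW, hqY]
    exact ⟨by linear_combination -hdet, by omega, by omega, by omega, by omega⟩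
  obtain ⟨hp', hq'⟩ := bezoutNext_unique hb hBN0
  subst hp'; subst hq'
  -- apply the chain lemma
  obtain ⟨hm, hdiff⟩ := chain_eq_dl (m + k) m k a P' le_rfl ha2 hchain
  set l : List ℤ := dl a k with hldef
  -- d' agrees with the difference list
  have hd'' : ∀ i ∈ Finset.Icc 1 m, d' i = l.getD (i-1) 0 := by
    intro i hi
    rw [Finset.mem_Icc] at hi
    rw [hd' i hi.1 hi.2]
    have := hdiff (i-1) (by omega)
    rwa [show i - 1 + 1 = i by omega] at this
  -- the set of signed sums is the Finset of signed sums of `l`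
  have hset : {s : ℤ | ∃ ε : ℕ → ℤ,
      (∀ i ∈ Finset.Icc 1 m, ε i = 1 ∨ ε i = -1) ∧
      s = ∑ i ∈ Finset.Icc 1 m, ε i * d' i} = ↑(sgnF l) := by
    ext s
    simp only [Set.mem_setOf_eq, Finset.coe_sort_coe, Finset.mem_coe]
    rw [sgnF_mem, ← hm]
    constructor
    · rintro ⟨ε, hε, rfl⟩
      refine ⟨fun i => ε (i+1), fun i hi => hε (i+1) (by rw [Finset.mem_Icc]; omega), ?_⟩
      rw [← Finset.Ico_add_one_right_eq_Icc, Finset.sum_Ico_eq_sum_range]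
      simp only [Nat.add_sub_cancel]
      apply Finset.sum_congr rfl
      intro i hi
      rw [Finset.mem_range] at hi
      rw [show 1 + i = i + 1 by omega,
        hd'' (i+1) (by rw [Finset.mem_Icc]; omega)]
      simp
    · rintro ⟨ε, hε, rfl⟩
      refine ⟨fun i => if i = 0 then 1 else ε (i-1), fun i hi => by
        rw [Finset.mem_Icc] at hi
        simp only [show i ≠ 0 by omega, if_false]
        exact hε (i-1) (by omega), ?_⟩
      rw [← Finset.Ico_add_one_right_eq_Icc, Finset.sum_Ico_eq_sum_range]
      simp only [Nat.add_sub_cancel]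
      apply Finset.sum_congr rfl
      intro i hi
      rw [Finset.mem_range] at hi
      simp only [show 1 + i ≠ 0 by omega, if_false, Nat.add_sub_cancel_left]
      rw [hd'' (1+i) (by rw [Finset.mem_Icc]; omega)]
      simp [Nat.add_sub_cancel_left]
  rw [hset, Set.ncard_coe_finset]
  -- product identification
  have hcard := dl_card k ha2
  rw [← hldef] at hcard
  have hprod : ∏ i ∈ Finset.range (k+1), (r i + 1)
      = (-1)^(k+1) * ∏ i ∈ Finset.range (k+1), (a i - 1) := by
    calc ∏ i ∈ Finset.range (k+1), (r i + 1)
        = ∏ i ∈ Finset.range (k+1), ((-1) * (a i - 1)) :=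
          Finset.prod_congr rfl (fun i _ => by simp [hadef]; ring)
      _ = (∏ _i ∈ Finset.range (k+1), (-1:ℤ)) * ∏ i ∈ Finset.range (k+1), (a i - 1) :=
          Finset.prod_mul_distrib
      _ = (-1)^(k+1) * ∏ i ∈ Finset.range (k+1), (a i - 1) := by
          rw [Finset.prod_const, Finset.card_range]
  rw [hprod, Int.natAbs_mul, Int.natAbs_pow, ← hcard]
  simp
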